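/- Let (A, p, 0, ½, 1) be a mobi algebra with derived operations ā = p(1,a,0), a·b = p(0,a,b), and a⊕b = p(a,½,b). Then for all a, b, c ∈ A: ½ · p(a,b,c) = (b̄ · a) ⊕ (b · c). -/
import Mathlib


/-- A mobi algebra: a set with a ternary operation `p` and constants `e0`, `half`, `e1`. -/
structure MobiAlgebra (A : Type*) where
  p : A → A → A → A
  e0 : A
  half : A
  e1 : A
  A1 : p e1 half e0 = half
  A2 : ∀ a, p e0 a e1 = a
  A3 : ∀ a b, p a b a = a
  A4 : ∀ a b, p a e0 b = a
  A5 : ∀ a b, p a e1 b = b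
  A6 : ∀ a a' b, p a half b = p a' half b → a = a'
  A7 : ∀ a b c1 c2 c3, p a (p c1 c2 c3) b = p (p a c1 b) c2 (p a c3 b)
  A8 : ∀ a1 a2 b1 b2 c,
    p (p a1 c b1) half (p a2 c b2) = p (p a1 half a2) c (p b1 half b2)

/-- Property (p_to_ring): in a mobi algebra, with ā = p(1,a,0),
a·b = p(0,a,b) and a⊕b = p(a,½,b), one has ½·p(a,b,c) = (b̄·a) ⊕ (b·c). -/
theorem mobi_half_mul_p {A : Type*} (M : MobiAlgebra A) (a b c : A) :
    M.p M.e0 M.half (M.p a b c) =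
      M.p (M.p M.e0 (M.p M.e1 b M.e0) a) M.half (M.p M.e0 b c) := by
  have comm : ∀ x y : A, M.p x M.half y = M.p y M.half x := by
    intro x y
    conv_lhs => rw [← M.A1]
    rw [M.A7, M.A5, M.A4]
  have hba : M.p M.e0 (M.p M.e1 b M.e0) a = M.p a b M.e0 := by
    rw [M.A7, M.A5, M.A4]
  rw [hba, M.A8]
  conv_lhs => rw [show M.e0 = M.p M.e0 b M.e0 from (M.A3 _ _).symm]
  rw [M.A8, comm a M.e0]
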